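/- arXiv:2509.26098 — 2 statements merged into one kernel-verified Lean document; each statement's English description precedes it below -/
import Mathlib

section
/- Let 1 < α < 2, 0 < β < d, and let p, q satisfy 1 ≤ p < α/β, q = (d+α)/β, and p ≤ q. If f ∈ Ḃ^{−β,∞}_∞(ℝ^d), i.e. sup_{t>0} t^{β/α} ‖p_t ∗ f‖_{L^∞} < ∞ where p_t is the fractional heat kernel with Fourier symbol e^{−t|ξ|^α}, then the function (t,x) ↦ p_t ∗ f(x) belongs to the parabolic Morrey space M^{p,q}_α([0,∞)×ℝ^d) and ‖p_t ∗ f‖_{M^{p,q}_α} ≤ C ‖f‖_{Ḃ^{−β,∞}_∞}. -/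
open MeasureTheory
open scoped RealInnerProductSpace ENNReal

/-- The fractional heat kernel `p_t` with Fourier symbol `e^{-t|ξ|^α}`. -/
noncomputable def fracHeatKernel (d : ℕ) (α t : ℝ) (x : EuclideanSpace ℝ (Fin d)) : ℝ :=
  (2 * Real.pi) ^ (-(d : ℝ)) *
    ∫ ξ : EuclideanSpace ℝ (Fin d), Real.cos (⟪x, ξ⟫) * Real.exp (-t * ‖ξ‖ ^ α)

/-- The convolution `p_t ∗ f`. -/
noncomputable def heatConv (d : ℕ) (α t : ℝ) (f : EuclideanSpace ℝ (Fin d) → ℝ)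
    (x : EuclideanSpace ℝ (Fin d)) : ℝ :=
  ∫ y, fracHeatKernel d α t (x - y) * f y

/-- The thermic Besov norm `‖f‖_{Ḃ^{-β,∞}_∞} = sup_{t>0} t^{β/α} ‖p_t ∗ f‖_{L^∞}`. -/
noncomputable def besovNorm (d : ℕ) (α β : ℝ) (f : EuclideanSpace ℝ (Fin d) → ℝ) : ℝ≥0∞ :=
  ⨆ (t : ℝ) (_ : 0 < t),
    ENNReal.ofReal (t ^ (β / α)) * eLpNorm (heatConv d α t f) ⊤ volume

/-- The parabolic Morrey norm of `ψ` on `[0,∞) × ℝᵈ`. -/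
noncomputable def pmNormHalf (d : ℕ) (α p q : ℝ)
    (ψ : ℝ × EuclideanSpace ℝ (Fin d) → ℝ) : ℝ≥0∞ :=
  ⨆ (r : ℝ) (_ : 0 < r) (t : ℝ) (_ : 0 ≤ t) (x : EuclideanSpace ℝ (Fin d)),
    ENNReal.ofReal (r ^ (-((d : ℝ) + α) * (1 / p - 1 / q))) *
      (∫⁻ sy in {sy : ℝ × EuclideanSpace ℝ (Fin d) |
          0 ≤ sy.1 ∧ |t - sy.1| ^ (1 / α) + dist x sy.2 < r},
        ENNReal.ofReal (|ψ sy| ^ p)) ^ (1 / p)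

/-- One-sided Tonelli: the lower Lebesgue integral over a product measure is bounded by
an iterated bound, with no measurability assumption on `g`. -/
theorem my_lintegral_prod_le {α' β' : Type*} [MeasurableSpace α'] [MeasurableSpace β']
    (μ : Measure α') (ν : Measure β') [SFinite ν] (g : α' × β' → ℝ≥0∞) (H : α' → ℝ≥0∞)
    (h : ∀ᵐ s ∂μ, ∫⁻ y, g (s, y) ∂ν ≤ H s) :
    ∫⁻ z, g z ∂(μ.prod ν) ≤ ∫⁻ s, H s ∂μ := by
  rw [MeasureTheory.lintegral_def]
  refine iSup₂_le fun φ hφ => ?_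
  rw [← SimpleFunc.lintegral_eq_lintegral φ (μ.prod ν)]
  rw [lintegral_prod _ φ.measurable.aemeasurable]
  refine lintegral_mono_ae (h.mono fun s hs => ?_)
  exact le_trans (lintegral_mono fun y => hφ (s, y)) hs

/-- Subadditivity of `x ^ c` for `0 ≤ c ≤ 1`, difference form. -/
theorem my_rpow_sub_le {a b c : ℝ} (ha : 0 ≤ a) (hab : a ≤ b) (hc0 : 0 ≤ c) (hc1 : c ≤ 1) :
    b ^ c - a ^ c ≤ (b - a) ^ c := by
  have hb : 0 ≤ b := ha.trans hab
  have hba : 0 ≤ b - a := by linarith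
  have h := NNReal.rpow_add_le_add_rpow a.toNNReal (b - a).toNNReal hc0 hc1
  rw [← Real.toNNReal_add ha hba] at h
  have hab' : a + (b - a) = b := by ring
  rw [hab'] at h
  have h' := (NNReal.coe_le_coe).2 h
  push_cast at h'
  rw [Real.coe_toNNReal _ hb, Real.coe_toNNReal _ ha, Real.coe_toNNReal _ hba] at h'
  linarith

/-- If `f ∈ Ḃ^{-β,∞}_∞(ℝᵈ)` with `0 < β < d`, `1 ≤ p < α/β`, `q = (d+α)/β`, `p ≤ q`,
then the heat extension `(t,x) ↦ p_t ∗ f(x)` belongs to `M^{p,q}_α([0,∞)×ℝᵈ)` and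
`‖p_t ∗ f‖_{M^{p,q}_α} ≤ C ‖f‖_{Ḃ^{-β,∞}_∞}`. -/
theorem besov_subset_parabolicMorrey (d : ℕ) (α β p q : ℝ)
    (hα : 1 < α) (hα' : α < 2) (hβ : 0 < β) (hβd : β < d)
    (hp : 1 ≤ p) (hp' : p < α / β) (hq : q = ((d : ℝ) + α) / β) (hpq : p ≤ q) :
    ∃ C : ℝ, 0 < C ∧ ∀ f : EuclideanSpace ℝ (Fin d) → ℝ,
      besovNorm d α β f < ⊤ →
      pmNormHalf d α p q (fun sy => heatConv d α sy.1 f sy.2) ≤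
        ENNReal.ofReal C * besovNorm d α β f := by
  have hα0 : (0:ℝ) < α := by linarith
  have hp0 : (0:ℝ) < p := by linarith
  have hβp : β * p < α := by
    have := (lt_div_iff₀ hβ).mp hp'
    nlinarith
  set c : ℝ := 1 - β * p / α with hc_def
  have hγ0 : 0 < β * p / α := by positivity
  have hγ1 : β * p / α < 1 := (div_lt_one hα0).2 hβp
  have hc0 : 0 < c := by simp only [hc_def]; linarith
  have hc1 : c ≤ 1 := by simp only [hc_def]; linarith
  have hVb : 0 < (volume (Metric.ball (0 : EuclideanSpace ℝ (Fin d)) 1)).toReal :=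
    ENNReal.toReal_pos (Metric.measure_ball_pos volume 0 one_pos).ne' measure_ball_lt_top.ne
  set K : ℝ := (volume (Metric.ball (0 : EuclideanSpace ℝ (Fin d)) 1)).toReal * (2 ^ c / c)
    with hK_def
  have hK : 0 < K := by
    have h2 : (0:ℝ) < 2 ^ c := Real.rpow_pos_of_pos two_pos c
    exact mul_pos hVb (div_pos h2 hc0)
  refine ⟨K ^ (1/p), Real.rpow_pos_of_pos hK _, fun f hf => ?_⟩
  set B := besovNorm d α β f with hB_def
  set G : ℝ × EuclideanSpace ℝ (Fin d) → ℝ≥0∞ :=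
    fun sy => ENNReal.ofReal (|heatConv d α sy.1 f sy.2| ^ p) with hG_def
  -- pointwise slice bound from the Besov norm
  have slice : ∀ s : ℝ, 0 < s → ∀ᵐ y : EuclideanSpace ℝ (Fin d) ∂volume,
      G (s, y) ≤ ENNReal.ofReal (s ^ (-(β * p) / α)) * B ^ p := by
    intro s hs
    have hterm : ENNReal.ofReal (s ^ (β / α)) * eLpNorm (heatConv d α s f) ⊤ volume ≤ B := by
      rw [hB_def, besovNorm]
      exact le_iSup₂ (f := fun t (_ : 0 < t) =>
        ENNReal.ofReal (t ^ (β / α)) * eLpNorm (heatConv d α t f) ⊤ volume) s hs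
    have hrpos : (0:ℝ) < s ^ (β / α) := Real.rpow_pos_of_pos hs _
    have ha0 : ENNReal.ofReal (s ^ (β / α)) ≠ 0 := by
      simp [ENNReal.ofReal_eq_zero, not_le, hrpos]
    have hE : eLpNorm (heatConv d α s f) ⊤ volume ≤ ENNReal.ofReal (s ^ (-(β/α))) * B := by
      have hinv : ENNReal.ofReal (s ^ (-(β/α))) = (ENNReal.ofReal (s ^ (β/α)))⁻¹ := by
        rw [Real.rpow_neg hs.le, ENNReal.ofReal_inv_of_pos hrpos]
      calc eLpNorm (heatConv d α s f) ⊤ volume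
          = (ENNReal.ofReal (s ^ (β/α)))⁻¹ *
            (ENNReal.ofReal (s ^ (β/α)) * eLpNorm (heatConv d α s f) ⊤ volume) := by
            rw [← mul_assoc, ENNReal.inv_mul_cancel ha0 ENNReal.ofReal_ne_top, one_mul]
        _ ≤ (ENNReal.ofReal (s ^ (β/α)))⁻¹ * B := mul_le_mul_right hterm _
        _ = ENNReal.ofReal (s ^ (-(β/α))) * B := by rw [hinv]
    rw [eLpNorm_exponent_top, eLpNormEssSup] at hE
    filter_upwards [ENNReal.ae_le_essSup (fun y => (‖heatConv d α s f y‖₊ : ℝ≥0∞))] with y hy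
    have hy2 : (‖heatConv d α s f y‖₊ : ℝ≥0∞) ≤ ENNReal.ofReal (s ^ (-(β/α))) * B :=
      le_trans hy hE
    calc G (s, y) = (ENNReal.ofReal |heatConv d α s f y|) ^ p := by
          simp only [hG_def]
          exact (ENNReal.ofReal_rpow_of_nonneg (abs_nonneg _) hp0.le).symm
      _ = ((‖heatConv d α s f y‖₊ : ℝ≥0∞)) ^ p := by rw [← Real.enorm_eq_ofReal_abs, enorm_eq_nnnorm]
      _ ≤ (ENNReal.ofReal (s ^ (-(β/α))) * B) ^ p := ENNReal.rpow_le_rpow hy2 hp0.le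
      _ = ENNReal.ofReal (s ^ (-(β/α))) ^ p * B ^ p := ENNReal.mul_rpow_of_nonneg _ _ hp0.le
      _ = ENNReal.ofReal (s ^ (-(β * p) / α)) * B ^ p := by
          congr 1
          rw [ENNReal.ofReal_rpow_of_nonneg (Real.rpow_nonneg hs.le _) hp0.le,
            ← Real.rpow_mul hs.le]
          congr 1
          ring
  -- main estimate
  rw [pmNormHalf]
  refine iSup_le fun r => iSup_le fun hr => iSup_le fun t => iSup_le fun ht =>
    iSup_le fun x => ?_
  set A : Set (ℝ × EuclideanSpace ℝ (Fin d)) :=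
    {sy | 0 ≤ sy.1 ∧ |t - sy.1| ^ (1 / α) + dist x sy.2 < r} with hA_def
  have hA : MeasurableSet A := by
    have h1 : MeasurableSet {sy : ℝ × EuclideanSpace ℝ (Fin d) | 0 ≤ sy.1} :=
      measurable_fst measurableSet_Ici
    have hcont : Continuous fun sy : ℝ × EuclideanSpace ℝ (Fin d) =>
        |t - sy.1| ^ (1 / α) + dist x sy.2 := by
      refine Continuous.add ?_ (continuous_const.dist continuous_snd)
      exact ((continuous_const.sub continuous_fst).abs).rpow_const
        (fun z => Or.inr (by positivity))
    have h2 : IsOpen {sy : ℝ × EuclideanSpace ℝ (Fin d) |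
        |t - sy.1| ^ (1 / α) + dist x sy.2 < r} := isOpen_lt hcont continuous_const
    exact h1.inter h2.measurableSet
  set lo : ℝ := max (t - r ^ α) 0 with hlo_def
  set hi : ℝ := t + r ^ α with hhi_def
  have hra : (0:ℝ) < r ^ α := Real.rpow_pos_of_pos hr α
  have hlo0 : 0 ≤ lo := le_max_right _ _
  have hlohi : lo < hi := by
    rw [hlo_def, hhi_def]
    exact max_lt (by linarith) (by linarith)
  -- membership in A forces s ∈ [lo, hi)
  have hforce : ∀ sy : ℝ × EuclideanSpace ℝ (Fin d), sy ∈ A →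
      sy.1 ∈ Set.Ico lo hi ∧ sy.2 ∈ Metric.ball x r := by
    rintro ⟨s, y⟩ ⟨hs0, hlt⟩
    have hb1 : |t - s| ^ (1/α) < r :=
      lt_of_le_of_lt (le_add_of_nonneg_right dist_nonneg) hlt
    have hb2 : |t - s| < r ^ α := by
      have h := Real.rpow_lt_rpow (Real.rpow_nonneg (abs_nonneg _) _) hb1 hα0
      rwa [← Real.rpow_mul (abs_nonneg _), one_div, inv_mul_cancel₀ hα0.ne',
        Real.rpow_one] at h
    have hb3 := abs_lt.mp hb2
    constructor
    · exact ⟨max_le (by linarith [hb3.2]) hs0, by simp only [hhi_def]; linarith [hb3.1]⟩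
    · have : dist x y < r := by
        have hnn : 0 ≤ |t - s| ^ (1/α) := Real.rpow_nonneg (abs_nonneg _) _
        simp only at hlt
        linarith
      exact Metric.mem_ball'.2 this
  -- the slice-wise dominating function
  set H : ℝ → ℝ≥0∞ := fun s => (Set.Ico lo hi).indicator
      (fun s => ENNReal.ofReal (s ^ (-(β * p) / α))) s *
      (B ^ p * volume (Metric.ball x r)) with hH_def
  have hslice : ∀ᵐ s : ℝ ∂volume, ∫⁻ y, (A.indicator G) (s, y) ∂volume ≤ H s := by
    have h0 : ∀ᵐ s : ℝ ∂volume, s ≠ 0 := by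
      rw [ae_iff]
      simpa using measure_singleton (0:ℝ)
    filter_upwards [h0] with s hs0
    by_cases hsI : s ∈ Set.Ico lo hi
    · have hspos : 0 < s := lt_of_le_of_ne (le_trans hlo0 hsI.1) (Ne.symm hs0)
      have hptw : ∀ᵐ y : EuclideanSpace ℝ (Fin d) ∂volume,
          (A.indicator G) (s, y) ≤ (Metric.ball x r).indicator
            (fun _ => ENNReal.ofReal (s ^ (-(β * p) / α)) * B ^ p) y := by
        filter_upwards [slice s hspos] with y hy
        by_cases hmem : (s, y) ∈ A
        · rw [Set.indicator_of_mem hmem, Set.indicator_of_mem (hforce _ hmem).2]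
          exact hy
        · rw [Set.indicator_of_notMem hmem]; exact bot_le
      calc ∫⁻ y, (A.indicator G) (s, y) ∂volume
          ≤ ∫⁻ y, (Metric.ball x r).indicator
            (fun _ => ENNReal.ofReal (s ^ (-(β * p) / α)) * B ^ p) y ∂volume :=
            lintegral_mono_ae hptw
        _ = (ENNReal.ofReal (s ^ (-(β * p) / α)) * B ^ p) * volume (Metric.ball x r) :=
            lintegral_indicator_const measurableSet_ball _
        _ = H s := by
            rw [hH_def]
            simp only [Set.indicator_of_mem hsI]
            ring
    · have hz : ∀ y, (A.indicator G) (s, y) = 0 := by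
        intro y
        apply Set.indicator_of_notMem
        intro hmem
        exact hsI (hforce _ hmem).1
      simp only [hz, lintegral_zero]
      exact bot_le
  -- the time integral
  have htime : ∫⁻ s in Set.Ico lo hi, ENNReal.ofReal (s ^ (-(β * p) / α)) ∂volume ≤
      ENNReal.ofReal (2 ^ c / c * r ^ (α - β * p)) := by
    set e : ℝ := -(β * p) / α with he_def
    have hec : e + 1 = c := by rw [he_def, hc_def]; ring
    have he1 : -1 < e := by rw [he_def]; linarith
    have hrestrict : volume.restrict (Set.Ico lo hi) = volume.restrict (Set.Ioc lo hi) :=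
      Measure.restrict_congr_set Ico_ae_eq_Ioc
    rw [hrestrict]
    have hInt : IntegrableOn (fun s : ℝ => s ^ e) (Set.Ioc lo hi) volume :=
      (intervalIntegral.intervalIntegrable_rpow' he1).1
    have hnn : 0 ≤ᵐ[volume.restrict (Set.Ioc lo hi)] fun s : ℝ => s ^ e := by
      refine (ae_restrict_iff' measurableSet_Ioc).2 (Filter.Eventually.of_forall ?_)
      intro s hs
      exact (Real.rpow_pos_of_pos (lt_of_le_of_lt hlo0 hs.1) e).le
    rw [← ofReal_integral_eq_lintegral_ofReal hInt hnn]
    apply ENNReal.ofReal_le_ofReal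
    have hval : ∫ s in Set.Ioc lo hi, s ^ e = (hi ^ (e+1) - lo ^ (e+1))/(e+1) := by
      rw [← intervalIntegral.integral_of_le hlohi.le]
      exact integral_rpow (Or.inl he1)
    rw [hval]
    have hd1 : hi ^ (e+1) - lo ^ (e+1) ≤ (hi - lo) ^ (e+1) :=
      my_rpow_sub_le hlo0 hlohi.le (by linarith) (by linarith)
    have hd2 : hi - lo ≤ 2 * r ^ α := by
      rcases le_or_gt (t - r ^ α) 0 with h | h
      · rw [hlo_def, hhi_def, max_eq_right h]; linarith
      · rw [hlo_def, hhi_def, max_eq_left h.le]; linarith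
    have hd3 : (hi - lo) ^ (e+1) ≤ (2 * r ^ α) ^ (e+1) :=
      Real.rpow_le_rpow (by linarith) hd2 (by linarith)
    have hd4 : (2 * r ^ α) ^ (e+1) = 2 ^ c * r ^ (α - β * p) := by
      rw [Real.mul_rpow (by norm_num) hra.le, hec, ← Real.rpow_mul hr.le]
      congr 1
      rw [hc_def]
      field_simp
    have hc0' : (0:ℝ) < e + 1 := by linarith
    calc (hi ^ (e+1) - lo ^ (e+1))/(e+1) ≤ (2 ^ c * r ^ (α - β * p))/(e+1) :=
          (div_le_div_iff_of_pos_right hc0').2 (hd1.trans (hd3.trans_eq hd4))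
      _ = 2 ^ c / c * r ^ (α - β * p) := by rw [hec]; ring
  -- measurability of the time-slice dominating function
  have hmeas : Measurable fun s : ℝ => (Set.Ico lo hi).indicator
      (fun s => ENNReal.ofReal (s ^ (-(β * p) / α))) s := by
    refine Measurable.indicator ?_ measurableSet_Ico
    exact ENNReal.measurable_ofReal.comp (measurable_id.pow measurable_const)
  -- the full space-time bound
  have hmain : ∫⁻ sy in A, G sy ≤
      ENNReal.ofReal (K * r ^ ((d:ℝ) + α - β * p)) * B ^ p := by
    have h1 : ∫⁻ sy in A, G sy = ∫⁻ z, A.indicator G z ∂(volume.prod volume) := by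
      rw [← MeasureTheory.Measure.volume_eq_prod, lintegral_indicator hA]
    rw [h1]
    refine le_trans (my_lintegral_prod_le _ _ _ _ hslice) ?_
    have h2 : ∫⁻ s, H s ∂volume =
        (∫⁻ s in Set.Ico lo hi, ENNReal.ofReal (s ^ (-(β * p) / α)) ∂volume) *
          (B ^ p * volume (Metric.ball x r)) := by
      rw [hH_def, lintegral_mul_const _ hmeas, lintegral_indicator measurableSet_Ico]
    rw [h2]
    have hball : volume (Metric.ball x r) =
        ENNReal.ofReal (r ^ (d:ℕ)) *
          volume (Metric.ball (0 : EuclideanSpace ℝ (Fin d)) 1) := by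
      rw [Measure.addHaar_ball_of_pos volume x hr, finrank_euclideanSpace_fin]
    calc (∫⁻ s in Set.Ico lo hi, ENNReal.ofReal (s ^ (-(β * p) / α)) ∂volume) *
          (B ^ p * volume (Metric.ball x r))
        ≤ ENNReal.ofReal (2 ^ c / c * r ^ (α - β * p)) *
          (B ^ p * volume (Metric.ball x r)) := mul_le_mul_left htime _
      _ = ENNReal.ofReal (K * r ^ ((d:ℝ) + α - β * p)) * B ^ p := by
          rw [hball,
            ← ENNReal.ofReal_toReal
              (measure_ball_lt_top (x := (0 : EuclideanSpace ℝ (Fin d))) (r := 1)).ne,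
            ← ENNReal.ofReal_mul (by positivity)]
          rw [mul_comm (B ^ p) _, ← mul_assoc, ← ENNReal.ofReal_mul (by positivity)]
          congr 2
          rw [← Real.rpow_natCast r d, hK_def]
          rw [show (2:ℝ) ^ c / c * r ^ (α - β * p) * (r ^ (d:ℝ) *
            (volume (Metric.ball (0 : EuclideanSpace ℝ (Fin d)) 1)).toReal) =
            (volume (Metric.ball (0 : EuclideanSpace ℝ (Fin d)) 1)).toReal * (2 ^ c / c) *
            (r ^ (α - β * p) * r ^ (d:ℝ)) from by ring]
          rw [← Real.rpow_add hr]
          congr 1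
          ring
  -- conclusion
  have hq0 : (0:ℝ) < q := by
    rw [hq]; positivity
  have hdα : (0:ℝ) < (d:ℝ) + α := by positivity
  show ENNReal.ofReal (r ^ (-((d:ℝ) + α) * (1 / p - 1 / q))) *
      (∫⁻ sy in A, G sy) ^ (1 / p) ≤ ENNReal.ofReal (K ^ (1/p)) * B
  calc ENNReal.ofReal (r ^ (-((d:ℝ) + α) * (1 / p - 1 / q))) * (∫⁻ sy in A, G sy) ^ (1 / p)
      ≤ ENNReal.ofReal (r ^ (-((d:ℝ) + α) * (1 / p - 1 / q))) *
        (ENNReal.ofReal (K * r ^ ((d:ℝ) + α - β * p)) * B ^ p) ^ (1 / p) :=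
        mul_le_mul_right (ENNReal.rpow_le_rpow hmain (by positivity)) _
    _ = ENNReal.ofReal (r ^ (-((d:ℝ) + α) * (1 / p - 1 / q))) *
        (ENNReal.ofReal ((K * r ^ ((d:ℝ) + α - β * p)) ^ (1 / p)) * B) := by
        rw [ENNReal.mul_rpow_of_nonneg _ _ (by positivity : (0:ℝ) ≤ 1/p),
          ENNReal.ofReal_rpow_of_nonneg (by positivity) (by positivity),
          ← ENNReal.rpow_mul, mul_one_div_cancel hp0.ne', ENNReal.rpow_one]
    _ = ENNReal.ofReal (r ^ (-((d:ℝ) + α) * (1 / p - 1 / q)) *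
        (K * r ^ ((d:ℝ) + α - β * p)) ^ (1 / p)) * B := by
        rw [← mul_assoc, ← ENNReal.ofReal_mul (by positivity)]
    _ = ENNReal.ofReal (K ^ (1/p)) * B := by
        congr 2
        rw [Real.mul_rpow hK.le (Real.rpow_nonneg hr.le _), ← Real.rpow_mul hr.le]
        rw [mul_comm (K ^ (1/p)) _, ← mul_assoc, ← Real.rpow_add hr]
        rw [show -((d:ℝ) + α) * (1 / p - 1 / q) + ((d:ℝ) + α - β * p) * (1 / p) = 0 from by
          rw [hq]; field_simp; ring]
        rw [Real.rpow_zero, one_mul]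
end

section
/- Let 1 < α < 2, 0 < β < (d+α)/p with 1 ≤ p < α/β, t > 0, x ∈ ℝ^d, and r > 0. Then ∬_{{|t−s|^{1/α}+|x−y|<r, s>0}} s^{−pβ/α} dy ds ≤ C r^{d+α−pβ}, with C independent of t, x, r. -/
open MeasureTheory
open scoped ENNReal
open MeasureTheory Set
open scoped ENNReal

lemma lint_rpow_Ioo {γ L : ℝ} (hγ : γ < 1) (hL : 0 < L) :
    (∫⁻ s in Ioo 0 L, ENNReal.ofReal (s ^ (-γ))) =
      ENNReal.ofReal (L ^ (1 - γ) / (1 - γ)) := by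
  have hint : IntervalIntegrable (fun s : ℝ => s ^ (-γ)) volume 0 L :=
    intervalIntegral.intervalIntegrable_rpow' (by linarith)
  have hio : IntegrableOn (fun s : ℝ => s ^ (-γ)) (Ioo 0 L) volume :=
    ((intervalIntegrable_iff_integrableOn_Ioc_of_le hL.le).mp hint).mono_set
      Ioo_subset_Ioc_self
  rw [← ofReal_integral_eq_lintegral_ofReal hio ?nn]
  case nn =>
    filter_upwards [ae_restrict_mem measurableSet_Ioo] with s hs
    exact Real.rpow_nonneg hs.1.le _
  congr 1
  rw [← integral_Ioc_eq_integral_Ioo, ← intervalIntegral.integral_of_le hL.le,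
    integral_rpow (Or.inl (by linarith))]
  rw [Real.zero_rpow (by linarith)]
  ring_nf


/-- Key integral estimate: for `1 < α < 2`, `0 < β < (d+α)/p`, `1 ≤ p < α/β`,
`∬_{{|t-s|^{1/α}+|x-y|<r, s>0}} s^{-pβ/α} dy ds ≤ C r^{d+α-pβ}`, uniformly in
`t > 0`, `x` and `r > 0`. -/
theorem parabolic_weight_integral_bound (d : ℕ) (α β p : ℝ)
    (hα : 1 < α) (hα' : α < 2) (hβ : 0 < β) (hβ' : β < ((d : ℝ) + α) / p)
    (hp : 1 ≤ p) (hp' : p < α / β) :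
    ∃ C : ℝ, 0 < C ∧ ∀ (t : ℝ), 0 < t → ∀ (x : EuclideanSpace ℝ (Fin d)) (r : ℝ),
      0 < r →
      (∫⁻ sy in {sy : ℝ × EuclideanSpace ℝ (Fin d) |
          0 < sy.1 ∧ |t - sy.1| ^ (1 / α) + dist x sy.2 < r},
        ENNReal.ofReal (sy.1 ^ (-(p * β / α)))) ≤
        ENNReal.ofReal (C * r ^ ((d : ℝ) + α - p * β)) := by
  have hα0 : (0 : ℝ) < α := by linarith
  have hp0 : (0 : ℝ) < p := by linarith
  set γ : ℝ := p * β / α with hγdef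
  have hγ0 : 0 < γ := by positivity
  have hγ1 : γ < 1 := by
    rw [hγdef, div_lt_one hα0]
    calc p * β < (α / β) * β := mul_lt_mul_of_pos_right hp' hβ
    _ = α := div_mul_cancel₀ _ hβ.ne'
  have h1γ : (0:ℝ) < 1 - γ := by linarith
  set c : ℝ := (volume (Metric.ball (0 : EuclideanSpace ℝ (Fin d)) 1)).toReal with hcdef
  have hc : 0 < c :=
    ENNReal.toReal_pos (Metric.measure_ball_pos volume _ one_pos).ne' measure_ball_lt_top.ne
  have hcvol : volume (Metric.ball (0 : EuclideanSpace ℝ (Fin d)) 1) = ENNReal.ofReal c :=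
    (ENNReal.ofReal_toReal measure_ball_lt_top.ne).symm
  have hC1 : (0:ℝ) < 3 / (1 - γ) + 2 := by positivity
  refine ⟨(3 / (1 - γ) + 2) * c, by positivity, fun t ht x r hr => ?_⟩
  set T : ℝ := r ^ α with hTdef
  have hT0 : 0 < T := Real.rpow_pos_of_pos hr α
  set A : Set ℝ := Ioi 0 ∩ Ioo (t - T) (t + T) with hAdef
  have hAm : MeasurableSet A := measurableSet_Ioi.inter measurableSet_Ioo
  have hexp : α * (1 - γ) = α - p * β := by
    rw [hγdef, mul_sub, mul_one, mul_div_assoc', mul_comm α (p * β), mul_div_assoc,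
      div_self hα0.ne', mul_one]
  have hTpow : T ^ (1 - γ) = r ^ (α - p * β) := by
    rw [hTdef, ← Real.rpow_mul hr.le, hexp]
  have hrpow0 : (0:ℝ) < r ^ (α - p * β) := Real.rpow_pos_of_pos hr _
  -- inclusion into a product
  have hsub : {sy : ℝ × EuclideanSpace ℝ (Fin d) |
      0 < sy.1 ∧ |t - sy.1| ^ (1 / α) + dist x sy.2 < r} ⊆ A ×ˢ Metric.ball x r := by
    rintro ⟨s, y⟩ ⟨hs, hlt⟩
    have h1 : (0:ℝ) ≤ |t - s| ^ (1 / α) := Real.rpow_nonneg (abs_nonneg _) _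
    have h2 : (0:ℝ) ≤ dist x y := dist_nonneg
    have hts : |t - s| ^ (1 / α) < r := by
      simp only at hlt; linarith
    have hTlt : |t - s| < T := by
      have h3 := Real.rpow_lt_rpow h1 hts hα0
      rwa [← Real.rpow_mul (abs_nonneg _), one_div, inv_mul_cancel₀ hα0.ne',
        Real.rpow_one] at h3
    have habs := abs_lt.mp hTlt
    refine ⟨⟨hs, by constructor <;> [linarith; linarith]⟩, ?_⟩
    simp only [Metric.mem_ball, dist_comm]
    simp only at hlt
    linarith
  -- measurability of the integrand
  have hmeas : Measurable fun sy : ℝ × EuclideanSpace ℝ (Fin d) =>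
      ENNReal.ofReal (sy.1 ^ (-γ)) :=
    by fun_prop
  -- product splitting
  have hprod : (∫⁻ sy in A ×ˢ Metric.ball x r,
      ENNReal.ofReal (sy.1 ^ (-γ))) =
      (∫⁻ s in A, ENNReal.ofReal (s ^ (-γ))) * volume (Metric.ball x r) := by
    rw [Measure.volume_eq_prod, ← Measure.prod_restrict, lintegral_prod _ hmeas.aemeasurable]
    simp only [lintegral_const, Measure.restrict_apply_univ]
    rw [← lintegral_mul_const' _ _ measure_ball_lt_top.ne]
  -- bound on the time integral
  have htime : (∫⁻ s in A, ENNReal.ofReal (s ^ (-γ))) ≤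
      ENNReal.ofReal ((3 / (1 - γ) + 2) * r ^ (α - p * β)) := by
    rcases le_or_gt t (2 * T) with h2T | h2T
    · -- t small: A ⊆ Ioo 0 (3T)
      have hsub' : A ⊆ Ioo 0 (3 * T) := by
        rintro s ⟨hs1, hs2⟩
        exact ⟨hs1, by simp only [mem_Ioo] at hs2; linarith [hs2.2]⟩
      calc (∫⁻ s in A, ENNReal.ofReal (s ^ (-γ)))
          ≤ ∫⁻ s in Ioo 0 (3 * T), ENNReal.ofReal (s ^ (-γ)) :=
            lintegral_mono_set hsub'
        _ = ENNReal.ofReal ((3 * T) ^ (1 - γ) / (1 - γ)) :=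
            lint_rpow_Ioo hγ1 (by linarith)
        _ ≤ ENNReal.ofReal ((3 / (1 - γ) + 2) * r ^ (α - p * β)) := by
            apply ENNReal.ofReal_le_ofReal
            have e1 : (3 * T) ^ (1 - γ) = 3 ^ (1 - γ) * T ^ (1 - γ) :=
              Real.mul_rpow (by norm_num) hT0.le
            have e2 : (3:ℝ) ^ (1 - γ) ≤ 3 ^ (1:ℝ) :=
              Real.rpow_le_rpow_of_exponent_le (by norm_num) (by linarith)
            rw [Real.rpow_one] at e2
            have e3 : (0:ℝ) < T ^ (1 - γ) := Real.rpow_pos_of_pos hT0 _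
            rw [e1, hTpow]
            have hdiv : 3 / (1 - γ) * (1 - γ) = 3 := div_mul_cancel₀ _ h1γ.ne'
            rw [div_le_iff₀ h1γ]
            nlinarith [mul_le_mul_of_nonneg_right e2 hrpow0.le]
    · -- t large: s > T on A
      have hbound : ∀ s ∈ A, s ^ (-γ) ≤ T ^ (-γ) := by
        rintro s ⟨_, hs2⟩
        simp only [mem_Ioo] at hs2
        exact Real.rpow_le_rpow_of_nonpos hT0 (by linarith [hs2.1]) (by linarith)
      calc (∫⁻ s in A, ENNReal.ofReal (s ^ (-γ)))
          ≤ ∫⁻ _ in A, ENNReal.ofReal (T ^ (-γ)) :=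
            setLIntegral_mono measurable_const fun s hs =>
              ENNReal.ofReal_le_ofReal (hbound s hs)
        _ = ENNReal.ofReal (T ^ (-γ)) * volume A := by
            rw [setLIntegral_const]
        _ ≤ ENNReal.ofReal (T ^ (-γ)) * volume (Ioo (t - T) (t + T)) :=
            by gcongr; exact inter_subset_right
        _ = ENNReal.ofReal (T ^ (-γ)) * ENNReal.ofReal (2 * T) := by
            rw [Real.volume_Ioo]; ring_nf
        _ = ENNReal.ofReal (T ^ (-γ) * (2 * T)) :=
            (ENNReal.ofReal_mul (Real.rpow_nonneg hT0.le _)).symm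
        _ ≤ ENNReal.ofReal ((3 / (1 - γ) + 2) * r ^ (α - p * β)) := by
            apply ENNReal.ofReal_le_ofReal
            have e1 : T ^ (-γ) * (2 * T) = 2 * T ^ (1 - γ) := by
              rw [show (1 : ℝ) - γ = -γ + 1 by ring, Real.rpow_add hT0,
                Real.rpow_one]
              ring
            rw [e1, hTpow]
            have : (0:ℝ) ≤ 3 / (1 - γ) := by positivity
            nlinarith
  -- ball volume
  have hball : volume (Metric.ball x r) = ENNReal.ofReal (c * r ^ (d:ℝ)) := by
    rw [Measure.addHaar_ball_of_pos volume x hr, finrank_euclideanSpace_fin, hcvol,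
      ← ENNReal.ofReal_mul (by positivity), ← Real.rpow_natCast r d]
    ring_nf
  -- put it all together
  calc (∫⁻ sy in {sy : ℝ × EuclideanSpace ℝ (Fin d) |
          0 < sy.1 ∧ |t - sy.1| ^ (1 / α) + dist x sy.2 < r},
        ENNReal.ofReal (sy.1 ^ (-(p * β / α))))
      ≤ ∫⁻ sy in A ×ˢ Metric.ball x r, ENNReal.ofReal (sy.1 ^ (-γ)) :=
        lintegral_mono_set hsub
    _ = (∫⁻ s in A, ENNReal.ofReal (s ^ (-γ))) * volume (Metric.ball x r) := hprod
    _ ≤ ENNReal.ofReal ((3 / (1 - γ) + 2) * r ^ (α - p * β)) *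
          ENNReal.ofReal (c * r ^ (d:ℝ)) := by
        rw [hball]; gcongr
    _ = ENNReal.ofReal ((3 / (1 - γ) + 2) * c * r ^ ((d:ℝ) + α - p * β)) := by
        rw [← ENNReal.ofReal_mul (by positivity)]
        congr 1
        rw [show (d:ℝ) + α - p * β = (α - p * β) + (d:ℝ) by ring,
          Real.rpow_add hr]
        ring
end
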